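/- Suppose measurable functions ℓ, u, ℓ₁, u₁, ℓ₋₁, u₋₁ on 𝓛 satisfy, almost surely, ℓ(L) ≤ E(Y₁−Y₋₁|L) ≤ u(L), ℓ₁(L) ≤ E(Y₁|L) ≤ u₁(L), and ℓ₋₁(L) ≤ E(Y₋₁|L) ≤ u₋₁(L), together with the identities ℓ = ℓ₁ − u₋₁ and u = u₁ − ℓ₋₁ pointwise, and let ω₁, ω₋₁ be measurable functions on 𝓛 with ω₁ ≥ 0, ω₋₁ ≥ 0, ω₁ + ω₋₁ = 1. Then for every treatment regime 𝒟, E[ ω₁(L)·( ℓ(L)·1{𝒟(L)=1} + ℓ₋₁(L) ) + ω₋₁(L)·( −u(L)·1{𝒟(L)=−1} + ℓ₁(L) ) ] ≤ E[ ℓ₁(L)·1{𝒟(L)=1} + ℓ₋₁(L)·1{𝒟(L)=−1} ] ≤ E[ Y_{𝒟(L)} ]. (Lemma S1, lower bounds on the value function.) -/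

import Mathlib

open MeasureTheory ProbabilityTheory

/-- The σ-algebra on `Ω` generated by a random variable. -/
def mOf {Ω 𝓛 : Type*} [MeasurableSpace 𝓛] (L : Ω → 𝓛) : MeasurableSpace Ω :=
  MeasurableSpace.comap L inferInstance

/-- **Lemma S1 (lower bounds on the value function).** If `ℓ ≤ E(Y₁−Y₋₁|L) ≤ u`,
`ℓ₁ ≤ E(Y₁|L) ≤ u₁`, `ℓ₋₁ ≤ E(Y₋₁|L) ≤ u₋₁` a.s., with `ℓ = ℓ₁ − u₋₁` and
`u = u₁ − ℓ₋₁`, and `ω₁, ω₋₁ ≥ 0` with `ω₁ + ω₋₁ = 1`, then for every regime `D`,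
`E[ω₁(L)(ℓ(L)1{D(L)=1} + ℓ₋₁(L)) + ω₋₁(L)(−u(L)1{D(L)=−1} + ℓ₁(L))]
  ≤ E[ℓ₁(L)1{D(L)=1} + ℓ₋₁(L)1{D(L)=−1}] ≤ E[Y_{D(L)}]`. -/
theorem value_function_lower_bounds
    {Ω 𝓛 : Type*} [MeasurableSpace Ω] [MeasurableSpace 𝓛]
    (μ : Measure Ω) [IsProbabilityMeasure μ]
    (L : Ω → 𝓛) (hL : Measurable L)
    (Y1 Ym1 : Ω → ℝ) (hY1int : Integrable Y1 μ) (hYm1int : Integrable Ym1 μ)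
    (l u l1 u1 lm1 um1 ω1 ωm1 : 𝓛 → ℝ)
    (hlm : Measurable l) (hum : Measurable u) (hl1m : Measurable l1) (hu1m : Measurable u1)
    (hlm1m : Measurable lm1) (hum1m : Measurable um1)
    (hω1m : Measurable ω1) (hωm1m : Measurable ωm1)
    (hlint : Integrable (fun ω => l (L ω)) μ) (huint : Integrable (fun ω => u (L ω)) μ)
    (hl1int : Integrable (fun ω => l1 (L ω)) μ) (hu1int : Integrable (fun ω => u1 (L ω)) μ)
    (hlm1int : Integrable (fun ω => lm1 (L ω)) μ) (hum1int : Integrable (fun ω => um1 (L ω)) μ)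
    -- a.s. bounds on the conditional means
    (hbd : ∀ᵐ ω ∂μ, l (L ω) ≤ (μ[(fun ω' => Y1 ω' - Ym1 ω') | mOf L]) ω
        ∧ (μ[(fun ω' => Y1 ω' - Ym1 ω') | mOf L]) ω ≤ u (L ω))
    (hbd1 : ∀ᵐ ω ∂μ, l1 (L ω) ≤ (μ[Y1 | mOf L]) ω ∧ (μ[Y1 | mOf L]) ω ≤ u1 (L ω))
    (hbdm1 : ∀ᵐ ω ∂μ, lm1 (L ω) ≤ (μ[Ym1 | mOf L]) ω ∧ (μ[Ym1 | mOf L]) ω ≤ um1 (L ω))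
    -- pointwise identities relating the bounds
    (hlid : ∀ x, l x = l1 x - um1 x) (huid : ∀ x, u x = u1 x - lm1 x)
    -- weights
    (hω1 : ∀ x, 0 ≤ ω1 x) (hωm1 : ∀ x, 0 ≤ ωm1 x) (hωsum : ∀ x, ω1 x + ωm1 x = 1)
    -- a treatment regime
    (D : 𝓛 → ℝ) (hD : Measurable D) (hDval : ∀ x, D x = 1 ∨ D x = -1) :
    (∫ ω, ω1 (L ω) * (l (L ω) * (if D (L ω) = 1 then 1 else 0) + lm1 (L ω))
        + ωm1 (L ω) * (-(u (L ω)) * (if D (L ω) = -1 then 1 else 0) + l1 (L ω)) ∂μ)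
      ≤ (∫ ω, l1 (L ω) * (if D (L ω) = 1 then 1 else 0)
          + lm1 (L ω) * (if D (L ω) = -1 then 1 else 0) ∂μ)
    ∧ (∫ ω, l1 (L ω) * (if D (L ω) = 1 then 1 else 0)
          + lm1 (L ω) * (if D (L ω) = -1 then 1 else 0) ∂μ)
      ≤ ∫ ω, Y1 ω * (if D (L ω) = 1 then 1 else 0)
          + Ym1 ω * (if D (L ω) = -1 then 1 else 0) ∂μ := by
  classical
  set s : Set Ω := {ω | D (L ω) = 1} with hs_def
  set t : Set Ω := {ω | D (L ω) = -1} with ht_def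
  have hsm : MeasurableSet s := (hD.comp hL) (measurableSet_singleton 1)
  have htm : MeasurableSet t := (hD.comp hL) (measurableSet_singleton (-1))
  have hm : mOf L ≤ ‹MeasurableSpace Ω› := hL.comap_le
  have hsmm : MeasurableSet[mOf L] s := ⟨{x | D x = 1}, hD (measurableSet_singleton 1), rfl⟩
  have htmm : MeasurableSet[mOf L] t := ⟨{x | D x = -1}, hD (measurableSet_singleton (-1)), rfl⟩
  have hind1 : ∀ (f : 𝓛 → ℝ), (fun ω => f (L ω) * (if D (L ω) = 1 then 1 else 0))
      = s.indicator (fun ω => f (L ω)) := by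
    intro f; funext ω; by_cases h : D (L ω) = 1 <;> simp [Set.indicator, hs_def, h]
  have hindm1 : ∀ (f : 𝓛 → ℝ), (fun ω => f (L ω) * (if D (L ω) = -1 then 1 else 0))
      = t.indicator (fun ω => f (L ω)) := by
    intro f; funext ω; by_cases h : D (L ω) = -1 <;> simp [Set.indicator, ht_def, h]
  have hindY1 : (fun ω => Y1 ω * (if D (L ω) = 1 then 1 else 0)) = s.indicator Y1 := by
    funext ω; by_cases h : D (L ω) = 1 <;> simp [Set.indicator, hs_def, h]
  have hindYm1 : (fun ω => Ym1 ω * (if D (L ω) = -1 then 1 else 0)) = t.indicator Ym1 := by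
    funext ω; by_cases h : D (L ω) = -1 <;> simp [Set.indicator, ht_def, h]
  -- integrability facts
  have hls : Integrable (fun ω => l (L ω) * (if D (L ω) = 1 then 1 else 0)) μ := by
    rw [hind1]; exact hlint.indicator hsm
  have hut : Integrable (fun ω => -(u (L ω)) * (if D (L ω) = -1 then 1 else 0)) μ := by
    have he : (fun ω => -(u (L ω)) * (if D (L ω) = -1 then 1 else 0))
        = t.indicator (fun ω => -(u (L ω))) := by
      funext ω; by_cases h : D (L ω) = -1 <;> simp [Set.indicator, ht_def, h]
    rw [he]; exact huint.neg.indicator htm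
  have hl1s : Integrable (fun ω => l1 (L ω) * (if D (L ω) = 1 then 1 else 0)) μ := by
    rw [hind1]; exact hl1int.indicator hsm
  have hlm1t : Integrable (fun ω => lm1 (L ω) * (if D (L ω) = -1 then 1 else 0)) μ := by
    rw [hindm1]; exact hlm1int.indicator htm
  have hωbd : ∀ (w : 𝓛 → ℝ), (∀ x, 0 ≤ w x) → (∀ x, 0 ≤ (fun y => 1 - w y) x) →
      ∃ C, ∀ ω, ‖w (L ω)‖ ≤ C := by
    intro w hw hw'
    exact ⟨1, fun ω => by
      rw [Real.norm_eq_abs, abs_of_nonneg (hw _)]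
      have := hw' (L ω); simp at this; linarith⟩
  have hω1bd : ∃ C, ∀ ω, ‖ω1 (L ω)‖ ≤ C := by
    refine ⟨1, fun ω => ?_⟩
    rw [Real.norm_eq_abs, abs_of_nonneg (hω1 _)]
    have := hωsum (L ω); have := hωm1 (L ω); linarith
  have hωm1bd : ∃ C, ∀ ω, ‖ωm1 (L ω)‖ ≤ C := by
    refine ⟨1, fun ω => ?_⟩
    rw [Real.norm_eq_abs, abs_of_nonneg (hωm1 _)]
    have := hωsum (L ω); have := hω1 (L ω); linarith
  have hf1 : Integrable (fun ω => ω1 (L ω) * (l (L ω) * (if D (L ω) = 1 then 1 else 0)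
      + lm1 (L ω))) μ :=
    (hls.add hlm1int).bdd_mul (hω1m.comp hL).aestronglyMeasurable
      (Filter.Eventually.of_forall hω1bd.choose_spec)
  have hf2 : Integrable (fun ω => ωm1 (L ω) * (-(u (L ω)) * (if D (L ω) = -1 then 1 else 0)
      + l1 (L ω))) μ :=
    (hut.add hl1int).bdd_mul (hωm1m.comp hL).aestronglyMeasurable
      (Filter.Eventually.of_forall hωm1bd.choose_spec)
  constructor
  · -- first inequality: pointwise a.e.
    refine integral_mono_ae (hf1.add hf2) (hl1s.add hlm1t) ?_
    filter_upwards [hbd1, hbdm1] with ω h1 hm1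
    have hA : l1 (L ω) ≤ u1 (L ω) := le_trans h1.1 h1.2
    have hB : lm1 (L ω) ≤ um1 (L ω) := le_trans hm1.1 hm1.2
    have hw1 := hω1 (L ω); have hw2 := hωm1 (L ω); have hw3 := hωsum (L ω)
    have hsub : ωm1 (L ω) = 1 - ω1 (L ω) := by linarith
    rcases hDval (L ω) with h | h <;> simp only [h, hlid, huid] <;> norm_num <;> rw [hsub]
    · nlinarith [mul_nonneg hw1 (sub_nonneg.mpr hB)]
    · nlinarith [mul_nonneg (by linarith : (0:ℝ) ≤ 1 - ω1 (L ω)) (sub_nonneg.mpr hA)]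
  · -- second inequality via conditional expectation
    have hY1s : Integrable (fun ω => Y1 ω * (if D (L ω) = 1 then 1 else 0)) μ := by
      rw [hindY1]; exact hY1int.indicator hsm
    have hYm1t : Integrable (fun ω => Ym1 ω * (if D (L ω) = -1 then 1 else 0)) μ := by
      rw [hindYm1]; exact hYm1int.indicator htm
    have e1 : (∫ ω, l1 (L ω) * (if D (L ω) = 1 then 1 else 0)
          + lm1 (L ω) * (if D (L ω) = -1 then 1 else 0) ∂μ)
        = (∫ ω in s, l1 (L ω) ∂μ) + ∫ ω in t, lm1 (L ω) ∂μ := by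
      rw [integral_add hl1s hlm1t, hind1 l1, hindm1 lm1, integral_indicator hsm,
        integral_indicator htm]
    have e2 : (∫ ω, Y1 ω * (if D (L ω) = 1 then 1 else 0)
          + Ym1 ω * (if D (L ω) = -1 then 1 else 0) ∂μ)
        = (∫ ω in s, Y1 ω ∂μ) + ∫ ω in t, Ym1 ω ∂μ := by
      rw [integral_add hY1s hYm1t, hindY1, hindYm1, integral_indicator hsm,
        integral_indicator htm]
    rw [e1, e2]
    have h1 : ∫ ω in s, l1 (L ω) ∂μ ≤ ∫ ω in s, Y1 ω ∂μ := by
      rw [← setIntegral_condExp hm hY1int hsmm]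
      refine setIntegral_mono_ae hl1int.integrableOn integrable_condExp.integrableOn ?_
      filter_upwards [hbd1] with ω h using h.1
    have h2 : ∫ ω in t, lm1 (L ω) ∂μ ≤ ∫ ω in t, Ym1 ω ∂μ := by
      rw [← setIntegral_condExp hm hYm1int htmm]
      refine setIntegral_mono_ae hlm1int.integrableOn integrable_condExp.integrableOn ?_
      filter_upwards [hbdm1] with ω h using h.1
    linarith
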